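/- Suppose the group Γ has the factorization property. Then for every finitely generated group G there are only finitely many equivalence classes of maximal elements in the set of Γ-limit quotients of G. -/

import Mathlib

open Filter

universe uG

/-- A sequence of homomorphisms `h : ℕ → G →* Γ` is *stable* if for every `g ∈ G`,
either `h n g = 1` for all but finitely many `n`, or `h n g ≠ 1` for all but
finitely many `n`. -/
def StableSeq {G Γ : Type*} [Group G] [Group Γ] (h : ℕ → G →* Γ) : Prop :=
  ∀ g : G, (∀ᶠ n in atTop, h n g = 1) ∨ (∀ᶠ n in atTop, h n g ≠ 1)

/-- The *stable kernel* of a sequence of homomorphisms: the set of `g ∈ G` such that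
`h n g = 1` for all but finitely many `n`.  It is always a subgroup. -/
def stableKer {G Γ : Type*} [Group G] [Group Γ] (h : ℕ → G →* Γ) : Subgroup G where
  carrier := { g | ∀ᶠ n in atTop, h n g = 1 }
  one_mem' := Eventually.of_forall fun n => map_one (h n)
  mul_mem' := fun ha hb => (ha.and hb).mono fun n hn => by
    simp only [map_mul, hn.1, hn.2, one_mul]
  inv_mem' := fun ha => ha.mono fun n hn => by
    simp only [map_inv, hn, inv_one]

instance stableKer_normal {G Γ : Type*} [Group G] [Group Γ] (h : ℕ → G →* Γ) :
    (stableKer h).Normal where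
  conj_mem := fun x hx g => hx.mono fun n hn => by
    simp only [map_mul, map_inv, hn, mul_one, mul_inv_cancel]

/-- `q : G →* L` is a `Γ`-limit quotient of `G` if it is surjective and its kernel
is the stable kernel of some stable sequence of homomorphisms `G →* Γ`. -/
def IsLimitQuotient (Γ : Type*) [Group Γ] {G L : Type*} [Group G] [Group L]
    (q : G →* L) : Prop :=
  Function.Surjective q ∧ ∃ h : ℕ → G →* Γ, StableSeq h ∧ q.ker = stableKer h

/-- `L` is a `Γ`-limit group if it is (isomorphic to) a `Γ`-limit quotient of some
finitely generated group. -/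
def IsLimitGroup (Γ : Type*) [Group Γ] (L : Type*) [Group L] : Prop :=
  ∃ (G : GrpCat.{uG}) (q : G →* L), Group.FG G ∧ IsLimitQuotient Γ q

/-- The strict order on limit quotients of a fixed group `G`: `R₁ > R₂` iff there is an
epimorphism `τ : R₁ → R₂` with nontrivial kernel such that `q₂ = τ ∘ q₁`. -/
def QuotGT {G R₁ R₂ : Type*} [Group G] [Group R₁] [Group R₂]
    (q₁ : G →* R₁) (q₂ : G →* R₂) : Prop :=
  ∃ τ : R₁ →* R₂, Function.Surjective τ ∧ τ.ker ≠ ⊥ ∧ q₂ = τ.comp q₁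

/-- Two quotients of `G` are equivalent if they differ by an isomorphism commuting with the
quotient maps. -/
def QuotEquiv {G R₁ R₂ : Type*} [Group G] [Group R₁] [Group R₂]
    (q₁ : G →* R₁) (q₂ : G →* R₂) : Prop :=
  ∃ τ : R₁ ≃* R₂, ∀ g : G, τ (q₁ g) = q₂ g

/-- `G` is fully residually `Γ` if every finite subset of `G` is mapped injectively by
some homomorphism `G →* Γ`. -/
def FullyResidually (Γ : Type*) [Group Γ] (G : Type*) [Group G] : Prop :=
  ∀ F : Finset G, ∃ h : G →* Γ, Set.InjOn h ↑F

/-- `Γ` has the *factorization property* if for every finitely generated group `H` and every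
stable sequence `h : ℕ → H →* Γ` with stable kernel `K`, some subsequence of `h` consists of
homomorphisms factoring through `H ⧸ K`. -/
def FactorizationProperty (Γ : Type*) [Group Γ] : Prop :=
  ∀ (H : GrpCat.{uG}), Group.FG H → ∀ h : ℕ → H →* Γ, StableSeq h →
    ∃ φ : ℕ → ℕ, StrictMono φ ∧ ∀ t : ℕ,
      ∃ π : (H ⧸ stableKer h) →* Γ, h (φ t) = π.comp (QuotientGroup.mk' (stableKer h))

/-- A `Γ`-limit quotient of `G` is *maximal* if no `Γ`-limit quotient of `G` is strictly
above it. -/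
def IsMaximalLimitQuotient (Γ : Type*) [Group Γ] {G L : Type*} [Group G] [Group L]
    (q : G →* L) : Prop :=
  IsLimitQuotient Γ q ∧
    ∀ (R : GrpCat.{uG}) (q' : G →* R), IsLimitQuotient Γ q' → ¬ QuotGT q' q


/-! ### Auxiliary machinery for the proof -/

section AuxMachinery

open Filter Function

universe v w uC uD

variable {Γ : Type uC} [Group Γ] {G : Type uD} [Group G]

private lemma mem_stableKer_iff {h : ℕ → G →* Γ} {g : G} :
    g ∈ stableKer h ↔ ∀ᶠ n in atTop, h n g = 1 := Iff.rfl

/-- A finitely generated group is countable. -/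
private lemma countable_of_fg (G : Type uD) [Group G] [Group.FG G] : Countable G := by
  classical
  obtain ⟨S, hcl, hfin⟩ := Group.fg_iff.1 ‹Group.FG G›
  have : Countable S := hfin.countable.to_subtype
  have h1 : Countable (FreeGroup S) := FreeGroup.toWord_injective.countable
  have hsurj : Function.Surjective (FreeGroup.lift (Subtype.val : S → G)) := by
    rw [← MonoidHom.range_eq_top, FreeGroup.range_lift_eq_closure, Subtype.range_val]
    exact hcl
  exact hsurj.countable

/-- Choose a strictly monotone sequence passing through a given sequence of infinite sets. -/
private lemma exists_strictMono_mem (T : ℕ → Set ℕ) (hT : ∀ k, (T k).Infinite) :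
    ∃ ψ : ℕ → ℕ, StrictMono ψ ∧ ∀ k, ψ k ∈ T k := by
  have H : ∀ k m : ℕ, ∃ b, b ∈ T k ∧ m < b := fun k m => (hT k).exists_gt m
  choose b hb1 hb2 using H
  refine ⟨fun k => Nat.rec (b 0 0) (fun k ih => b (k + 1) ih) k,
    strictMono_nat_of_lt_succ fun k => hb2 _ _, fun k => ?_⟩
  cases k with
  | zero => exact hb1 0 0
  | succ k => exact hb1 _ _

/-- Every sequence of homomorphisms from a countable group has a stable subsequence. -/
private lemma exists_stable_subseq [Countable G] (f : ℕ → G →* Γ) :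
    ∃ ψ : ℕ → ℕ, StrictMono ψ ∧ StableSeq fun k => f (ψ k) := by
  classical
  obtain ⟨e, he⟩ := exists_surjective_nat G
  set U := Filter.hyperfilter ℕ with hU
  set S : G → Set ℕ := fun g =>
    if {n | f n g = 1} ∈ U then {n | f n g = 1} else {n | f n g = 1}ᶜ with hS
  have hSU : ∀ g, S g ∈ U := by
    intro g
    by_cases hg : {n | f n g = 1} ∈ U
    · simp only [hS, if_pos hg]; exact hg
    · simp only [hS, if_neg hg]; exact Ultrafilter.compl_mem_iff_notMem.2 hg
  set T : ℕ → Set ℕ := fun k => ⋂ j ∈ Finset.range (k + 1), S (e j) with hT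
  have hTU : ∀ k, T k ∈ U := by
    intro k
    have : (⋂ j ∈ Finset.range (k + 1), S (e j)) ∈ (U : Filter ℕ) :=
      (Filter.biInter_finset_mem _).2 fun j _ => Ultrafilter.mem_coe.2 (hSU (e j))
    exact Ultrafilter.mem_coe.1 this
  have hTinf : ∀ k, (T k).Infinite := by
    intro k
    by_contra hfin
    exact Filter.notMem_hyperfilter_of_finite (Set.not_infinite.1 hfin) (hTU k)
  obtain ⟨ψ, hψ, hmem⟩ := exists_strictMono_mem T hTinf
  refine ⟨ψ, hψ, fun g => ?_⟩
  obtain ⟨j, rfl⟩ := he g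
  have key : ∀ k, j ≤ k → ψ k ∈ S (e j) := by
    intro k hk
    have h1 := hmem k
    rw [hT] at h1
    exact Set.mem_iInter₂.1 h1 j (Finset.mem_range.2 (Nat.lt_succ_of_le hk))
  by_cases hg : {n | f n (e j) = 1} ∈ U
  · left
    rw [Filter.eventually_atTop]
    refine ⟨j, fun k hk => ?_⟩
    have h1 := key k hk
    rw [hS] at h1; simp only [if_pos hg] at h1
    exact h1
  · right
    rw [Filter.eventually_atTop]
    refine ⟨j, fun k hk => ?_⟩
    have h1 := key k hk
    rw [hS] at h1; simp only [if_neg hg] at h1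
    exact h1

/-- Consequence of the factorization property, transported to an arbitrary finitely
generated group: along a subsequence, each homomorphism kills the stable kernel. -/
private lemma factor_all {Γ : Type uC} [Group Γ] {G : Type uD} [Group G] [Group.FG G]
    [Countable G] (hfac : FactorizationProperty.{v, uC} Γ)
    (h : ℕ → G →* Γ) (hs : StableSeq h) :
    ∃ φ : ℕ → ℕ, StrictMono φ ∧ ∀ t, stableKer h ≤ (h (φ t)).ker := by
  have hsmall : Small.{v} G := Countable.toSmall G
  let σ : Shrink.{v} G ≃* G := Shrink.mulEquiv
  let h' : ℕ → (Shrink.{v} G →* Γ) := fun n => (h n).comp σ.toMonoidHom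
  have hFG : Group.FG (Shrink.{v} G) :=
    Group.fg_of_surjective (f := σ.symm.toMonoidHom) σ.symm.surjective
  have hs' : StableSeq h' := fun x => hs (σ x)
  obtain ⟨φ, hφ, hfact⟩ := hfac (GrpCat.of (Shrink.{v} G)) hFG h' hs'
  refine ⟨φ, hφ, fun t g hg => ?_⟩
  obtain ⟨π, hπ⟩ := hfact t
  have hker : σ.symm g ∈ stableKer h' := by
    refine mem_stableKer_iff.2 ((mem_stableKer_iff.1 hg).mono fun n hn => ?_)
    show (h n) (σ (σ.symm g)) = 1
    rw [MulEquiv.apply_symm_apply]; exact hn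
  have h1 : h' (φ t) (σ.symm g) = 1 := by
    rw [hπ]
    have h2 : (QuotientGroup.mk' (stableKer h')) (σ.symm g) = 1 := by
      rw [QuotientGroup.mk'_apply]
      exact (QuotientGroup.eq_one_iff _).2 hker
    rw [MonoidHom.comp_apply, h2, map_one]
  have h3 : h (φ t) g = 1 := by
    have h4 : (h (φ t)) (σ (σ.symm g)) = 1 := h1
    rwa [MulEquiv.apply_symm_apply] at h4
  exact h3

/-- Every stable kernel has a finite "support": a finite subset such that any homomorphism
to `Γ` killing it kills the whole stable kernel. -/
private lemma exists_finite_support {Γ : Type uC} [Group Γ] {G : Type uD} [Group G]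
    [Group.FG G] [Countable G] (hfac : FactorizationProperty.{v, uC} Γ)
    (h : ℕ → G →* Γ) (hs : StableSeq h) {e : ℕ → G} (he : Function.Surjective e) :
    ∃ F : Finset G, (↑F : Set G) ⊆ (stableKer h : Set G) ∧
      ∀ f : G →* Γ, (∀ x ∈ F, f x = 1) → stableKer h ≤ f.ker := by
  classical
  by_contra hcon
  push_neg at hcon
  have step : ∀ n : ℕ, ∃ (f : G →* Γ) (x : G),
      (∀ g ∈ e '' Set.Iic n, g ∈ stableKer h → f g = 1) ∧ x ∈ stableKer h ∧ f x ≠ 1 := by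
    intro n
    set F : Finset G := ((Set.finite_Iic n).image e).toFinset.filter
      (fun g => g ∈ stableKer h) with hFdef
    have hFsub : (↑F : Set G) ⊆ (stableKer h : Set G) := by
      intro x hx
      simp only [hFdef, Finset.coe_filter, Set.mem_setOf_eq, Set.Finite.mem_toFinset] at hx
      exact hx.2
    obtain ⟨f, hf1, hf2⟩ := hcon F hFsub
    have hf2' : ∃ x, x ∈ stableKer h ∧ f x ≠ 1 := by
      by_contra hall
      push_neg at hall
      exact hf2 fun x hx => hall x hx
    obtain ⟨x, hx1, hx2⟩ := hf2'
    refine ⟨f, x, fun g hg hgk => hf1 g ?_, hx1, hx2⟩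
    simp only [hFdef, Finset.mem_filter, Set.Finite.mem_toFinset]
    exact ⟨hg, hgk⟩
  choose φ x hφ hx1 hx2 using step
  obtain ⟨ψ, hψ, hstab⟩ := exists_stable_subseq fun n => φ n
  have hKle : stableKer h ≤ stableKer fun k => φ (ψ k) := by
    intro g hg
    obtain ⟨j, rfl⟩ := he g
    refine mem_stableKer_iff.2 (Filter.eventually_atTop.2 ⟨j, fun k hk => ?_⟩)
    exact hφ (ψ k) (e j) ⟨j, le_trans hk hψ.le_apply, rfl⟩ hg
  obtain ⟨χ, hχ, hfa⟩ := factor_all hfac _ hstab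
  have h1 : φ (ψ (χ 0)) (x (ψ (χ 0))) = 1 :=
    MonoidHom.mem_ker.1 (hfa 0 (hKle (hx1 (ψ (χ 0)))))
  exact hx2 _ h1

/-- The kernel-level version of being a maximal limit quotient. -/
private def IsMaxKer (Γ : Type uC) [Group Γ] {G : Type uD} [Group G] (N : Subgroup G) : Prop :=
  (∃ h : ℕ → G →* Γ, StableSeq h ∧ stableKer h = N) ∧
    ∀ h : ℕ → G →* Γ, StableSeq h → stableKer h ≤ N → stableKer h = N

/-- Realize any stable kernel as a limit quotient with target in an arbitrary universe. -/
private lemma exists_limit_quotient_grp {Γ : Type uC} [Group Γ] {G : Type uD} [Group G]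
    [Countable G] (h : ℕ → G →* Γ) (hs : StableSeq h) :
    ∃ (R : GrpCat.{v}) (q : G →* R), IsLimitQuotient Γ q ∧ q.ker = stableKer h := by
  have hcq : Countable (G ⧸ stableKer h) := (QuotientGroup.mk'_surjective _).countable
  have hsm : Small.{v} (G ⧸ stableKer h) := Countable.toSmall _
  let σ : Shrink.{v} (G ⧸ stableKer h) ≃* (G ⧸ stableKer h) := Shrink.mulEquiv
  let q : G →* Shrink.{v} (G ⧸ stableKer h) :=
    σ.symm.toMonoidHom.comp (QuotientGroup.mk' (stableKer h))
  have hker : q.ker = stableKer h := by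
    ext g
    rw [MonoidHom.mem_ker]
    constructor
    · intro hgg
      have hmk : (QuotientGroup.mk' (stableKer h)) g = 1 := σ.symm.injective (by
        rw [map_one]
        exact hgg)
      rwa [QuotientGroup.mk'_apply, QuotientGroup.eq_one_iff] at hmk
    · intro hgg
      have hmk : (QuotientGroup.mk' (stableKer h)) g = 1 := by
        rw [QuotientGroup.mk'_apply]
        exact (QuotientGroup.eq_one_iff _).2 hgg
      show σ.symm ((QuotientGroup.mk' (stableKer h)) g) = 1
      rw [hmk, map_one]
  have hsurj : Function.Surjective q :=
    σ.symm.surjective.comp (QuotientGroup.mk'_surjective _)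
  exact ⟨GrpCat.of (Shrink.{v} (G ⧸ stableKer h)), q, ⟨hsurj, h, hs, hker⟩, hker⟩

/-- Descend a homomorphism along a surjection with smaller kernel. -/
private lemma exists_descend {L : Type v} {R : Type w} [Group L] [Group R]
    {q : G →* L} {q' : G →* R} (hq' : Function.Surjective q') (hle : q'.ker ≤ q.ker) :
    ∃ τ : R →* L, ∀ g, τ (q' g) = q g := by
  classical
  let eqv := QuotientGroup.quotientKerEquivOfSurjective q' hq'
  refine ⟨(QuotientGroup.lift q'.ker q hle).comp eqv.symm.toMonoidHom, fun g => ?_⟩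
  have hh : eqv.symm (q' g) = QuotientGroup.mk g := by
    rw [MulEquiv.symm_apply_eq]
    rfl
  simp only [MonoidHom.comp_apply, MulEquiv.coe_toMonoidHom, hh]
  rfl

/-- A maximal limit quotient (in any universe) has a maximal stable kernel. -/
private lemma maxKer_of_max {Γ : Type uC} [Group Γ] {G : Type uD} [Group G] [Countable G]
    {L : Type w} [Group L] {q : G →* L}
    (hq : IsMaximalLimitQuotient.{v, uC, uD, w} Γ q) : IsMaxKer Γ q.ker := by
  obtain ⟨⟨hsurj, h, hs, hker⟩, hmax⟩ := hq
  refine ⟨⟨h, hs, hker.symm⟩, fun h' hs' hle => ?_⟩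
  by_contra hne
  obtain ⟨R, q', hq', hkq'⟩ := exists_limit_quotient_grp.{v} h' hs'
  refine hmax R q' hq' ?_
  have hle' : q'.ker ≤ q.ker := by rw [hkq']; exact hle
  obtain ⟨τ, hτ⟩ := exists_descend hq'.1 hle'
  refine ⟨τ, ?_, ?_, ?_⟩
  · intro y
    obtain ⟨g, rfl⟩ := hsurj y
    exact ⟨q' g, hτ g⟩
  · obtain ⟨g0, hg0K, hg0N⟩ := SetLike.exists_of_lt (lt_of_le_of_ne hle hne)
    intro hbot
    have hy : q' g0 ∈ τ.ker := by
      rw [MonoidHom.mem_ker, hτ g0]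
      exact MonoidHom.mem_ker.1 hg0K
    rw [hbot, Subgroup.mem_bot] at hy
    have : g0 ∈ q'.ker := by rw [MonoidHom.mem_ker, hy]
    rw [hkq'] at this
    exact hg0N this
  · ext g
    simp [MonoidHom.comp_apply, hτ g]

/-- Conversely, a surjection whose kernel is a maximal stable kernel is a maximal limit
quotient (in every universe). -/
private lemma max_of_maxKer {Γ : Type uC} [Group Γ] {G : Type uD} [Group G]
    {L : Type w} [Group L] {q : G →* L}
    (hsurj : Function.Surjective q) (hmk : IsMaxKer Γ q.ker) :
    IsMaximalLimitQuotient.{v, uC, uD, w} Γ q := by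
  obtain ⟨⟨h, hs, hker⟩, hchar⟩ := hmk
  refine ⟨⟨hsurj, h, hs, hker.symm⟩, fun R q' hq' hgt => ?_⟩
  obtain ⟨τ, hτs, hτk, hτc⟩ := hgt
  obtain ⟨hs', h', hst', hker'⟩ := hq'
  have hle : q'.ker ≤ q.ker := by
    intro g hg
    rw [MonoidHom.mem_ker, hτc, MonoidHom.comp_apply, MonoidHom.mem_ker.1 hg, map_one]
  have heq : q'.ker = q.ker := by
    rw [hker']
    exact hchar h' hst' (hker' ▸ hle)
  refine hτk ?_
  rw [eq_bot_iff]
  intro y hy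
  obtain ⟨g, rfl⟩ := hs' y
  have h1 : q g = 1 := by rw [hτc, MonoidHom.comp_apply]; exact MonoidHom.mem_ker.1 hy
  have h2 : g ∈ q'.ker := by rw [heq]; exact MonoidHom.mem_ker.2 h1
  rw [Subgroup.mem_bot]
  exact MonoidHom.mem_ker.1 h2

/-- The core finiteness result: only finitely many maximal stable kernels. -/
private lemma maxKer_finite {Γ : Type uC} [Group Γ] (hfac : FactorizationProperty.{v, uC} Γ)
    (G : Type uD) [Group G] [Group.FG G] :
    {N : Subgroup G | IsMaxKer Γ N}.Finite := by
  classical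
  have hcnt : Countable G := countable_of_fg G
  rw [← Set.not_infinite]
  intro hinf
  obtain ⟨e, he⟩ := exists_surjective_nat G
  let ι := hinf.natEmbedding
  set K : ℕ → Subgroup G := fun i => (ι i : {N : Subgroup G | IsMaxKer Γ N}) with hKdef
  have hK : ∀ i, IsMaxKer Γ (K i) := fun i => (ι i).2
  have hKinj : Function.Injective K := fun i j hij => ι.injective (Subtype.ext hij)
  have sep : ∀ i, ∃ u : ℕ → G →* Γ,
      (∀ t, K i ≤ (u t).ker) ∧ ∀ g, g ∉ K i → ∀ᶠ t in atTop, u t g ≠ 1 := by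
    intro i
    obtain ⟨h, hs, hker⟩ := (hK i).1
    obtain ⟨φ, hφ, hfa⟩ := factor_all hfac h hs
    refine ⟨fun t => h (φ t), fun t => hker ▸ hfa t, fun g hg => ?_⟩
    have hne : ∀ᶠ n in atTop, h n g ≠ 1 :=
      (hs g).resolve_left fun hcon => hg (hker ▸ mem_stableKer_iff.2 hcon)
    exact hφ.tendsto_atTop.eventually hne
  choose u hu1 hu2 using sep
  have ht : ∀ i, ∃ t, ∀ g ∈ e '' Set.Iic i, g ∉ K i → u i t g ≠ 1 := by
    intro i
    have hfin : (e '' Set.Iic i).Finite := (Set.finite_Iic i).image e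
    have hev : ∀ᶠ t in atTop, ∀ g ∈ e '' Set.Iic i, g ∉ K i → u i t g ≠ 1 := by
      rw [Set.Finite.eventually_all hfin]
      intro g hg
      by_cases hgK : g ∈ K i
      · exact Eventually.of_forall fun t hcon => absurd hgK hcon
      · exact (hu2 i g hgK).mono fun t h' _ => h'
    exact hev.exists
  choose t htsep using ht
  set f : ℕ → G →* Γ := fun i => u i (t i) with hfdef
  obtain ⟨ψ, hψ, hstab⟩ := exists_stable_subseq f
  set Kinf := stableKer fun k => f (ψ k) with hKinfdef
  obtain ⟨F, hFsub, hFrad⟩ := exists_finite_support hfac _ hstab he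
  choose ν hνe using he
  set m := F.sup ν with hmdef
  obtain ⟨χ, hχ, hfa⟩ := factor_all hfac _ hstab
  have key : ∀ s : ℕ, m ≤ s → Kinf ≤ K (ψ (χ s)) := by
    intro s hs'
    have him : m ≤ ψ (χ s) := le_trans hs' (le_trans hχ.le_apply hψ.le_apply)
    have hFK : ∀ y ∈ F, y ∈ K (ψ (χ s)) := by
      intro y hyF
      by_contra hyK
      have hyB : y ∈ e '' Set.Iic (ψ (χ s)) :=
        ⟨ν y, le_trans (Finset.le_sup hyF) him, hνe y⟩
      exact htsep (ψ (χ s)) y hyB hyK (MonoidHom.mem_ker.1 (hfa s (hFsub hyF)))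
    have hrad : ∀ t', Kinf ≤ (u (ψ (χ s)) t').ker := fun t' =>
      hFrad (u (ψ (χ s)) t') fun y hyF => MonoidHom.mem_ker.1 (hu1 (ψ (χ s)) t' (hFK y hyF))
    intro g hg
    by_contra hgK
    obtain ⟨t', ht'⟩ := (hu2 (ψ (χ s)) g hgK).exists
    exact ht' (MonoidHom.mem_ker.1 (hrad t' hg))
  have hEq : ∀ s, m ≤ s → Kinf = K (ψ (χ s)) := fun s hs' =>
    (hK (ψ (χ s))).2 _ hstab (key s hs')
  have hcontra : ψ (χ m) = ψ (χ (m + 1)) :=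
    hKinj ((hEq m le_rfl).symm.trans (hEq (m + 1) (Nat.le_succ m)))
  exact absurd hcontra (ne_of_lt (hψ (hχ (Nat.lt_succ_self m))))

/-- Two surjections with equal kernels give equivalent quotients. -/
private lemma quotEquiv_of_ker_eq {L : Type v} {R : Type w} [Group L] [Group R]
    {q' : G →* L} {q : G →* R} (h1 : Function.Surjective q') (h2 : Function.Surjective q)
    (hk : q'.ker = q.ker) : QuotEquiv q' q := by
  let e1 := QuotientGroup.quotientKerEquivOfSurjective q' h1
  let e2 := QuotientGroup.quotientKerEquivOfSurjective q h2
  refine ⟨e1.symm.trans ((QuotientGroup.quotientMulEquivOfEq hk).trans e2), fun g => ?_⟩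
  have hh : e1.symm (q' g) = (QuotientGroup.mk g : G ⧸ q'.ker) := by
    rw [MulEquiv.symm_apply_eq]
    rfl
  simp only [MulEquiv.trans_apply, hh, QuotientGroup.quotientMulEquivOfEq_mk]
  rfl

end AuxMachinery

/-- if `Γ` has the factorization property then, for every finitely generated
group `G`, there are only finitely many equivalence classes of maximal elements in the set
of `Γ`-limit quotients of `G`. -/
theorem statement_5 {Γ : Type*} [Group Γ] (hfac : FactorizationProperty Γ)
    (G : Type*) [Group G] [Group.FG G] :
    ∃ (k : ℕ) (R : Fin k → GrpCat.{uG}) (q : ∀ i, G →* R i),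
      (∀ i, IsMaximalLimitQuotient Γ (q i)) ∧
      ∀ (L : GrpCat.{uG}) (q' : G →* L), IsMaximalLimitQuotient Γ q' →
        ∃ i, QuotEquiv q' (q i) := by
  classical
  have hcnt : Countable G := countable_of_fg G
  have hfin : {N : Subgroup G | IsMaxKer Γ N}.Finite := maxKer_finite hfac G
  set Fs := hfin.toFinset with hFs
  set N : Fin Fs.card → Subgroup G := fun i => ((Fs.equivFin.symm i : Fs) : Subgroup G) with hN
  have hNmem : ∀ i, IsMaxKer Γ (N i) := by
    intro i
    exact hfin.mem_toFinset.1 (Fs.equivFin.symm i).2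
  have hrep : ∀ i : Fin Fs.card, ∃ (R : GrpCat.{uG}) (q : G →* R),
      IsLimitQuotient Γ q ∧ q.ker = N i := by
    intro i
    obtain ⟨h, hs, hker⟩ := (hNmem i).1
    obtain ⟨R, q, hq, hq2⟩ := exists_limit_quotient_grp.{uG} h hs
    exact ⟨R, q, hq, hq2.trans hker⟩
  choose R q hq hqk using hrep
  refine ⟨Fs.card, R, q, fun i => ?_, fun L q' hq' => ?_⟩
  · exact max_of_maxKer (hq i).1 ((hqk i).symm ▸ hNmem i)
  · have hm : IsMaxKer Γ q'.ker := maxKer_of_max hq'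
    have hmem : q'.ker ∈ Fs := hfin.mem_toFinset.2 hm
    refine ⟨Fs.equivFin ⟨q'.ker, hmem⟩, ?_⟩
    have hNeq : N (Fs.equivFin ⟨q'.ker, hmem⟩) = q'.ker := by
      show ((Fs.equivFin.symm (Fs.equivFin ⟨q'.ker, hmem⟩) : Fs) : Subgroup G) = q'.ker
      rw [Equiv.symm_apply_apply]
    refine quotEquiv_of_ker_eq hq'.1.1 (hq _).1 ?_
    rw [hqk, hNeq]
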